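/- For every K ∈ 𝓛 there is a set L ⊆ K such that L ∈ 𝓛 and L is nowhere dense in K with respect to the Euclidean subspace topology on K. -/

import Mathlib

open Set Filter MeasureTheory ENNReal

def MemCalL (K : Set ℝ) : Prop :=
  K.Nonempty ∧ NullMeasurableSet K volume ∧
    ∀ U : Set ℝ, IsOpen U → (K ∩ U = ∅ ∨ 0 < volume (K ∩ U))

/-- Shrinking lemma: around any point of `K ∩ U` one can find a small open neighborhood
inside `U` meeting `K` in measure at most `δ`. -/
lemma aux_shrink (K : Set ℝ) (hm : NullMeasurableSet K volume) (U : Set ℝ) (hU : IsOpen U)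
    (x : ℝ) (hx : x ∈ K ∩ U) (δ : ℝ≥0∞) (hδ : δ ≠ 0) :
    ∃ V : Set ℝ, IsOpen V ∧ V ⊆ U ∧ x ∈ V ∧ volume (K ∩ V) ≤ δ := by
  obtain ⟨ε, hε, hball⟩ := Metric.isOpen_iff.mp hU x hx.2
  set s : ℕ → Set ℝ := fun n => K ∩ Set.Ioo (x - ((n : ℝ) + 1)⁻¹) (x + ((n : ℝ) + 1)⁻¹) with hs
  have hmeas : ∀ n, NullMeasurableSet (s n) volume := fun n =>
    hm.inter measurableSet_Ioo.nullMeasurableSet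
  have hanti : Antitone s := by
    intro n m hnm
    have h1 : ((m : ℝ) + 1)⁻¹ ≤ ((n : ℝ) + 1)⁻¹ := by
      have : (n : ℝ) ≤ (m : ℝ) := Nat.cast_le.mpr hnm
      apply inv_anti₀ (by positivity)
      linarith
    exact inter_subset_inter_right _ (Ioo_subset_Ioo (by linarith) (by linarith))
  have hfin : ∃ n, volume (s n) ≠ ∞ := by
    refine ⟨0, ne_top_of_le_ne_top ?_ (measure_mono (inter_subset_right))⟩
    simp [Real.volume_Ioo]
  have hsub : (⋂ n, s n) ⊆ {x} := by
    intro y hy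
    simp only [mem_iInter] at hy
    have hle : |y - x| ≤ 0 := by
      refine ge_of_tendsto' tendsto_one_div_add_atTop_nhds_zero_nat (fun n => ?_)
      have h2 := (hy n).2
      rw [mem_Ioo] at h2
      rw [abs_sub_le_iff, one_div]
      constructor <;> linarith [h2.1, h2.2]
    have : y = x := by
      have := abs_nonneg (y - x)
      have h0 : |y - x| = 0 := le_antisymm hle this
      have := abs_eq_zero.mp h0
      linarith
    simp [this]
  have h0 : volume (⋂ n, s n) = 0 :=
    le_antisymm (le_trans (measure_mono hsub) (by simp)) zero_le
  have htends := tendsto_measure_iInter_atTop hmeas hanti hfin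
  rw [h0] at htends
  have hδpos : (0 : ℝ≥0∞) < δ := pos_iff_ne_zero.mpr hδ
  obtain ⟨n, hn⟩ := ((htends.eventually_lt_const hδpos)).exists
  set m := min ε ((n : ℝ) + 1)⁻¹ with hmdef
  have hmpos : 0 < m := lt_min hε (by positivity)
  refine ⟨Metric.ball x m, Metric.isOpen_ball,
    (Metric.ball_subset_ball (min_le_left _ _)).trans hball, Metric.mem_ball_self hmpos, ?_⟩
  refine le_trans (measure_mono ?_) hn.le
  refine inter_subset_inter_right _ ?_
  rw [Real.ball_eq_Ioo]
  exact Ioo_subset_Ioo (by linarith [min_le_right ε ((n : ℝ) + 1)⁻¹])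
    (by linarith [min_le_right ε ((n : ℝ) + 1)⁻¹])

theorem stmt_9 (K : Set ℝ) (hK : MemCalL K) :
    ∃ L : Set ℝ, L ⊆ K ∧ MemCalL L ∧
      IsNowhereDense (Subtype.val ⁻¹' L : Set ↥K) := by
  obtain ⟨hne, hKm, hKpos⟩ := hK
  -- Step 1: K has positive measure
  have hKvol : 0 < volume K := by
    rcases hKpos univ isOpen_univ with h | h
    · rw [inter_univ] at h; exact absurd h (nonempty_iff_ne_empty.mp hne)
    · rwa [inter_univ] at h
  -- Step 2: a bounded window of positive finite measure
  have hI0 : ∃ n : ℕ, 0 < volume (K ∩ Ioo (-(n : ℝ)) n) := by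
    by_contra h
    push_neg at h
    have hU : K = ⋃ n : ℕ, K ∩ Ioo (-(n : ℝ)) n := by
      ext y
      simp only [mem_iUnion, mem_inter_iff]
      constructor
      · intro hy
        obtain ⟨n, hn⟩ := exists_nat_gt |y|
        obtain ⟨h1, h2⟩ := abs_lt.mp hn
        exact ⟨n, hy, mem_Ioo.mpr ⟨by linarith, h2⟩⟩
      · rintro ⟨n, hy, _⟩; exact hy
    have h0 : volume K = 0 := by
      rw [hU]
      exact measure_iUnion_null fun n => le_antisymm (h n) zero_le
    exact absurd h0 hKvol.ne'
  obtain ⟨N, hc⟩ := hI0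
  set I0 : Set ℝ := Ioo (-(N : ℝ)) N with hI0def
  set c : ℝ≥0∞ := volume (K ∩ I0) with hcdef
  have hcfin : c ≠ ⊤ := by
    refine ne_top_of_le_ne_top ?_ (measure_mono inter_subset_right)
    simp [hI0def, Real.volume_Ioo]
  set b : ℝ≥0∞ := c / 2 / 2 with hbdef
  have hbne : b ≠ 0 := (ENNReal.half_pos (ENNReal.half_pos hc.ne').ne').ne'
  -- Step 3: choose small open sets in each rational interval
  set e : ℚ × ℚ ≃ ℕ := Denumerable.eqv (ℚ × ℚ) with hedef
  have hchoice : ∀ i : ℚ × ℚ, ∃ V : Set ℝ, IsOpen V ∧ V ⊆ Ioo (i.1 : ℝ) (i.2 : ℝ) ∧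
      volume (K ∩ V) ≤ b * 2⁻¹ ^ (e i) ∧
      ((K ∩ Ioo (i.1 : ℝ) (i.2 : ℝ)).Nonempty → (K ∩ V).Nonempty) := by
    intro i
    by_cases hne' : (K ∩ Ioo (i.1 : ℝ) (i.2 : ℝ)).Nonempty
    · obtain ⟨x, hx⟩ := hne'
      have hδ : b * 2⁻¹ ^ (e i) ≠ 0 := by
        exact mul_ne_zero hbne (pow_ne_zero _ (by simp))
      obtain ⟨V, hVo, hVsub, hxV, hVm⟩ := aux_shrink K hKm _ isOpen_Ioo x hx _ hδ
      exact ⟨V, hVo, hVsub, hVm, fun _ => ⟨x, hx.1, hxV⟩⟩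
    · exact ⟨∅, isOpen_empty, empty_subset _, by simp, fun h => absurd h hne'⟩
  choose V hVopen hVsub hVmeas hVne using hchoice
  -- Step 4: the union of the V's has small measure inside K
  have hUnion : volume (K ∩ ⋃ i, V i) ≤ c / 2 := by
    calc volume (K ∩ ⋃ i, V i) = volume (⋃ i, K ∩ V i) := by rw [inter_iUnion]
      _ ≤ ∑' i, volume (K ∩ V i) := measure_iUnion_le _
      _ ≤ ∑' i, b * 2⁻¹ ^ (e i) := ENNReal.tsum_le_tsum hVmeas
      _ = ∑' n : ℕ, b * 2⁻¹ ^ n := e.tsum_eq (fun n => b * 2⁻¹ ^ n)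
      _ = b * ∑' n : ℕ, 2⁻¹ ^ n := ENNReal.tsum_mul_left
      _ = b * 2 := by rw [ENNReal.tsum_geometric, ENNReal.one_sub_inv_two, inv_inv]
      _ = b + b := by rw [mul_two]
      _ = c / 2 := ENNReal.add_halves _
  set L0 : Set ℝ := K \ ⋃ i, V i with hL0def
  have hL0m : NullMeasurableSet L0 volume :=
    hKm.diff (isOpen_iUnion hVopen).measurableSet.nullMeasurableSet
  have hL0pos : 0 < volume L0 := by
    rw [pos_iff_ne_zero]
    intro h0
    have hcle : c ≤ c / 2 := by
      calc c ≤ volume (L0 ∪ (K ∩ ⋃ i, V i)) := by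
              refine measure_mono fun y hy => ?_
              by_cases hyV : y ∈ ⋃ i, V i
              · exact Or.inr ⟨hy.1, hyV⟩
              · exact Or.inl ⟨hy.1, hyV⟩
        _ ≤ volume L0 + volume (K ∩ ⋃ i, V i) := measure_union_le _ _
        _ ≤ 0 + c / 2 := add_le_add h0.le hUnion
        _ = c / 2 := zero_add _
    exact absurd hcle (not_le.mpr (ENNReal.half_lt_self hc.ne' hcfin))
  -- Step 5: remove the null part
  set S : Set (Set ℝ) := {U : Set ℝ | IsOpen U ∧ volume (L0 ∩ U) = 0} with hSdef
  set W : Set ℝ := ⋃₀ S with hWdef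
  have hWopen : IsOpen W := isOpen_sUnion fun U hU => hU.1
  have hWnull : volume (L0 ∩ W) = 0 := by
    obtain ⟨T, hTc, hTS, hTU⟩ := TopologicalSpace.isOpen_sUnion_countable S (fun U hU => hU.1)
    rw [hWdef, ← hTU, sUnion_eq_biUnion, inter_iUnion₂]
    exact (measure_biUnion_null_iff hTc).mpr fun U hU => (hTS hU).2
  set L : Set ℝ := L0 \ W with hLdef
  have hLsub : L ⊆ K := fun y hy => hy.1.1
  have hLm : NullMeasurableSet L volume :=
    hL0m.diff hWopen.measurableSet.nullMeasurableSet
  have hLpos : 0 < volume L := by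
    have hsub : L0 ⊆ L ∪ (L0 ∩ W) := by
      intro y hy
      by_cases hyW : y ∈ W
      · exact Or.inr ⟨hy, hyW⟩
      · exact Or.inl ⟨hy, hyW⟩
    have h1 : volume L0 ≤ volume L + volume (L0 ∩ W) :=
      (measure_mono hsub).trans (measure_union_le _ _)
    rw [hWnull, add_zero] at h1
    exact lt_of_lt_of_le hL0pos h1
  -- key emptiness criterion
  have hkey : ∀ U : Set ℝ, IsOpen U → volume (L ∩ U) = 0 → L ∩ U = ∅ := by
    intro U hU h0
    have hL0U : volume (L0 ∩ U) = 0 := by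
      have hsub : L0 ∩ U ⊆ (L ∩ U) ∪ (L0 ∩ W) := by
        intro y hy
        by_cases hyW : y ∈ W
        · exact Or.inr ⟨hy.1, hyW⟩
        · exact Or.inl ⟨⟨hy.1, hyW⟩, hy.2⟩
      refine le_antisymm ?_ zero_le
      calc volume (L0 ∩ U) ≤ volume ((L ∩ U) ∪ (L0 ∩ W)) := measure_mono hsub
        _ ≤ volume (L ∩ U) + volume (L0 ∩ W) := measure_union_le _ _
        _ = 0 := by rw [h0, hWnull, add_zero]
    have hUW : U ⊆ W := subset_sUnion_of_mem (show U ∈ S from ⟨hU, hL0U⟩)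
    ext y
    simp only [mem_inter_iff, mem_empty_iff_false, iff_false, not_and]
    intro hyL hyU
    exact hyL.2 (hUW hyU)
  refine ⟨L, hLsub, ⟨nonempty_of_measure_ne_zero hLpos.ne', hLm, ?_⟩, ?_⟩
  · intro U hU
    by_cases h0 : volume (L ∩ U) = 0
    · exact Or.inl (hkey U hU h0)
    · exact Or.inr (pos_iff_ne_zero.mpr h0)
  · -- nowhere density in the subspace K
    rw [IsNowhereDense, eq_empty_iff_forall_notMem]
    intro x hx
    obtain ⟨U, hUopen, hUeq⟩ :=
      isOpen_induced_iff.mp (isOpen_interior (s := closure (Subtype.val ⁻¹' L : Set ↥K)))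
    rw [← hUeq] at hx
    have hxU : (x : ℝ) ∈ U := hx
    obtain ⟨ε, hε, hball⟩ := Metric.isOpen_iff.mp hUopen _ hxU
    obtain ⟨p, hp1, hp2⟩ := exists_rat_btwn (show (x : ℝ) - ε < x by linarith)
    obtain ⟨q, hq1, hq2⟩ := exists_rat_btwn (show (x : ℝ) < (x : ℝ) + ε by linarith)
    have hIoosub : Ioo (p : ℝ) (q : ℝ) ⊆ U := by
      refine subset_trans (fun y hy => ?_) hball
      obtain ⟨h1, h2⟩ := mem_Ioo.mp hy
      rw [Metric.mem_ball, Real.dist_eq, abs_sub_lt_iff]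
      constructor <;> linarith
    have hne' : (K ∩ Ioo (((p, q) : ℚ × ℚ).1 : ℝ) (((p, q) : ℚ × ℚ).2 : ℝ)).Nonempty :=
      ⟨x, x.2, mem_Ioo.mpr ⟨hp2, hq1⟩⟩
    obtain ⟨y, hyK, hyV⟩ := hVne (p, q) hne'
    have h1 : (⟨y, hyK⟩ : ↥K) ∈ interior (closure (Subtype.val ⁻¹' L : Set ↥K)) := by
      rw [← hUeq]
      exact hIoosub (hVsub (p, q) hyV)
    have h2 : y ∈ closure L :=
      (continuous_subtype_val (p := fun z => z ∈ K)).closure_preimage_subset L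
        (interior_subset h1)
    have hdisj : L ⊆ (V (p, q))ᶜ := by
      intro z hz hzV
      exact hz.1.2 (mem_iUnion.mpr ⟨(p, q), hzV⟩)
    have hycl : y ∈ (V (p, q))ᶜ :=
      closure_minimal hdisj (hVopen (p, q)).isClosed_compl h2
    exact hycl hyV
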